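/- In the group Γ × S_∞, where S_∞ is the group of finitely supported permutations of ℕ and Γ is any group, there exist sequences (g_n) and (h_n) of elements such that g_n and h_n do not commute for any n, but for every fixed element x of the group, g_n commutes with x and h_n commutes with x for all sufficiently large n. -/

import Mathlib

/-- The group `S_∞` of finitely supported permutations of `ℕ`, as a subgroup of
`Equiv.Perm ℕ`. -/
def finitaryPerms : Subgroup (Equiv.Perm ℕ) where
  carrier := {σ : Equiv.Perm ℕ | {n : ℕ | σ n ≠ n}.Finite}
  one_mem' := by simp
  mul_mem' := by
    intro σ τ hσ hτ
    refine (hσ.union hτ).subset ?_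
    intro n hn
    by_contra hc
    simp only [Set.mem_union, Set.mem_setOf_eq, not_or, not_not] at hc
    apply hn
    show σ (τ n) = n
    rw [hc.2, hc.1]
  inv_mem' := by
    intro σ hσ
    refine (hσ.image σ.symm).subset ?_
    intro n hn
    refine ⟨σ n, ?_, σ.symm_apply_apply n⟩
    show σ (σ n) ≠ σ n
    intro hcon
    have h1 : σ n = n := σ.injective hcon
    apply hn
    show σ⁻¹ n = n
    calc σ⁻¹ n = σ⁻¹ (σ n) := by rw [h1]
    _ = n := by simp

lemma swap_mem_finitaryPerms (a b : ℕ) : Equiv.swap a b ∈ finitaryPerms := by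
  apply ((Set.finite_singleton b).insert a).subset
  intro n hn
  by_contra hc
  simp only [Set.mem_insert_iff, Set.mem_singleton_iff, not_or] at hc
  exact hn (Equiv.swap_apply_of_ne_of_ne hc.1 hc.2)

lemma swap_comm_of_fixes {σ : Equiv.Perm ℕ} {a b : ℕ} (ha : σ a = a) (hb : σ b = b) :
    Equiv.swap a b * σ = σ * Equiv.swap a b := by
  have hd : Equiv.Perm.Disjoint σ (Equiv.swap a b) := by
    intro x
    by_cases hxa : x = a
    · exact Or.inl (hxa ▸ ha)
    by_cases hxb : x = b
    · exact Or.inl (hxb ▸ hb)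
    · exact Or.inr (Equiv.swap_apply_of_ne_of_ne hxa hxb)
  exact (hd.commute.symm).eq

/-- in `Γ × S_∞`, where `S_∞` is the group of finitely supported permutations
of `ℕ` and `Γ` is any group, there are sequences `(g_n)`, `(h_n)` such that `g_n` and `h_n`
never commute, yet both eventually commute with every fixed element of the group. -/
theorem stmt_9 {Γ : Type*} [Group Γ] :
    ∃ g h : ℕ → Γ × finitaryPerms,
      (∀ n : ℕ, g n * h n ≠ h n * g n) ∧
      (∀ x : Γ × finitaryPerms, ∃ N : ℕ, ∀ n ≥ N,
        g n * x = x * g n ∧ h n * x = x * h n) := by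

  classical
  refine ⟨fun n => (1, ⟨Equiv.swap (3*n) (3*n+1), swap_mem_finitaryPerms _ _⟩),
    fun n => (1, ⟨Equiv.swap (3*n+1) (3*n+2), swap_mem_finitaryPerms _ _⟩), ?_, ?_⟩
  · intro n heq
    have h2 := congrArg (fun p => ((p.2 : finitaryPerms) : Equiv.Perm ℕ) (3*n)) heq
    simp only [Prod.snd_mul, Subgroup.coe_mul, Equiv.Perm.mul_apply] at h2
    have l1 : (Equiv.swap (3*n+1) (3*n+2)) (3*n) = 3*n :=
      Equiv.swap_apply_of_ne_of_ne (by omega) (by omega)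
    rw [l1, Equiv.swap_apply_left, Equiv.swap_apply_left] at h2
    omega
  · rintro ⟨γ, σ, hσ⟩
    obtain ⟨N, hN⟩ := hσ.bddAbove
    refine ⟨N + 1, fun n hn => ?_⟩
    have hfix : ∀ m : ℕ, m ≥ 3*n → σ m = m := by
      intro m hm
      by_contra hc
      have := hN hc
      omega
    constructor <;>
    · refine Prod.ext (by simp) (Subtype.ext ?_)
      simp only [Prod.snd_mul, Subgroup.coe_mul]
      exact swap_comm_of_fixes (hfix _ (by omega)) (hfix _ (by omega))
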